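/- The mutation operator M is chaotic according to Knudsen on (X_N, d): M has sensitive dependence on initial conditions (there exists δ₀ > 0 such that for every X ∈ X_N and every ε > 0 there exist Y ∈ B(X, ε) and n ∈ ℕ with d(M^n(X), M^n(Y)) ≥ δ₀), and M has a dense orbit (there exists X ∈ X_N whose orbit {M^n(X) : n ∈ ℕ} is dense in X_N). -/

import Mathlib

/-- The discrete metric on ℝ: `ddelta x y = 1` if `x ≠ y`, and `0` otherwise. -/
noncomputable def ddelta (x y : ℝ) : ℝ := if x = y then 0 else 1

/-- `Fdel (x₁, x₂) = |x₁| + δ(0, x₂)`. -/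
noncomputable def Fdel (x : ℝ × ℝ) : ℝ := |x.1| + ddelta 0 x.2

/-- A single mutation: a position in `{1,…,N}` together with a nucleotide in `{1,2,3,4}`
(encoded with `Fin N` and `Fin 4`). -/
abbrev Mut (N : ℕ) := Fin N × Fin 4

/-- A mutations sequence: an infinite sequence of mutations. -/
abbrev MutSeq (N : ℕ) := ℕ → Mut N

/-- A genome of size `N`: a sequence of `N` nucleotides in `{1,2,3,4}` (encoded by `Fin 4`,
where `0,1,2,3` stand for the labels `1,2,3,4`, i.e. `A,C,G,T`). -/
abbrev Genome (N : ℕ) := Fin N → Fin 4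

/-- The phase space `X_N = {1,2,3,4}^N × S_N`. -/
abbrev Phase (N : ℕ) := Genome N × MutSeq N

/-- A mutation regarded as a pair of real numbers, using the labels
`1,…,N` for positions and `1,2,3,4` for nucleotides. -/
noncomputable def mutR {N : ℕ} (m : Mut N) : ℝ × ℝ :=
  ((m.1.1 : ℝ) + 1, (m.2.1 : ℝ) + 1)

/-- `d_G(G, Ǧ) = Σ_{k=1}^{N} δ(G_k, Ǧ_k)`, with `δ` the discrete metric. -/
noncomputable def dG {N : ℕ} (G G' : Genome N) : ℝ :=
  ∑ k : Fin N, if G k = G' k then (0 : ℝ) else 1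

/-- `d_S(S, Š) = (9/N) Σ_{k=0}^{∞} F(S^k − Š^k)/10^(k+1)`. -/
noncomputable def dS {N : ℕ} (S S' : MutSeq N) : ℝ :=
  (9 / N) * ∑' k : ℕ, Fdel (mutR (S k) - mutR (S' k)) / 10 ^ (k + 1)

/-- The distance `d((G,S), (Ǧ,Š)) = d_G(G,Ǧ) + d_S(S,Š)` on the phase space. -/
noncomputable def dX {N : ℕ} (X Y : Phase N) : ℝ := dG X.1 Y.1 + dS X.2 Y.2

/-- The mutation operator `M(G, S) = (G', σ(S))`: the nucleotide of `G` at position `(S⁰)₁`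
is replaced by the nucleotide `(S⁰)₂`, and the mutations sequence is shifted. -/
noncomputable def Mop {N : ℕ} (X : Phase N) : Phase N :=
  (Function.update X.1 (X.2 0).1 (X.2 0).2, fun k => X.2 (k + 1))

/-- A set `U ⊆ X_N` is open for the metric `d` if around any of its points it
contains an open ball of positive radius. -/
def IsOpenD {N : ℕ} (U : Set (Phase N)) : Prop :=
  ∀ x ∈ U, ∃ ε > 0, ∀ y, dX x y < ε → y ∈ U


-- ### auxiliary lemmas

lemma ddelta_nonneg (x y : ℝ) : 0 ≤ ddelta x y := by unfold ddelta; split <;> norm_num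
lemma ddelta_le_one (x y : ℝ) : ddelta x y ≤ 1 := by unfold ddelta; split <;> norm_num

lemma Fdel_nonneg (x : ℝ × ℝ) : 0 ≤ Fdel x := add_nonneg (abs_nonneg _) (ddelta_nonneg _ _)

lemma Fdel_mutR_le {N : ℕ} (a b : Mut N) : Fdel (mutR a - mutR b) ≤ N := by
  have ha : (a.1.1 : ℝ) + 1 ≤ N := by exact_mod_cast a.1.2
  have hb : (b.1.1 : ℝ) + 1 ≤ N := by exact_mod_cast b.1.2
  have ha0 : (0:ℝ) ≤ (a.1.1 : ℝ) := Nat.cast_nonneg _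
  have hb0 : (0:ℝ) ≤ (b.1.1 : ℝ) := Nat.cast_nonneg _
  have h2 : (mutR a - mutR b).1 = ((a.1.1:ℝ)+1) - ((b.1.1:ℝ)+1) := rfl
  have habs : |((a.1.1:ℝ)+1) - ((b.1.1:ℝ)+1)| ≤ (N:ℝ) - 1 :=
    abs_le.mpr ⟨by linarith, by linarith⟩
  have hd := ddelta_le_one 0 (mutR a - mutR b).2
  unfold Fdel
  rw [h2]; linarith

lemma summable_dS {N : ℕ} (S S' : MutSeq N) :
    Summable (fun k => Fdel (mutR (S k) - mutR (S' k)) / 10 ^ (k+1)) := by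
  have hgeo0 : Summable (fun k : ℕ => (N:ℝ) * (1/10:ℝ)^k) :=
    (summable_geometric_of_lt_one (by norm_num) (by norm_num)).mul_left _
  have hgeo : Summable (fun k : ℕ => (N:ℝ) * (1/10:ℝ)^(k+1)) :=
    (summable_nat_add_iff (f := fun k : ℕ => (N:ℝ) * (1/10:ℝ)^k) 1).mpr hgeo0
  apply Summable.of_nonneg_of_le _ _ hgeo
  · intro k; exact div_nonneg (Fdel_nonneg _) (by positivity)
  · intro k
    have h1 : ((N:ℝ) * (1/10:ℝ)^(k+1)) = (N:ℝ) / 10^(k+1) := by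
      rw [div_pow, one_pow]; ring
    rw [h1]
    gcongr
    exact Fdel_mutR_le _ _

lemma dS_nonneg {N : ℕ} (S S' : MutSeq N) : 0 ≤ dS S S' :=
  mul_nonneg (by positivity)
    (tsum_nonneg fun k => div_nonneg (Fdel_nonneg _) (by positivity))

lemma dS_le_of_agree {N : ℕ} (hN : 1 ≤ N) {S S' : MutSeq N} {m : ℕ}
    (h : ∀ k < m, S k = S' k) : dS S S' ≤ (1/10:ℝ)^m := by
  set a : ℕ → ℝ := fun k => Fdel (mutR (S k) - mutR (S' k)) / 10 ^ (k+1) with ha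
  have hsum := summable_dS S S'
  have hzero : ∀ k < m, a k = 0 := by
    intro k hk
    have hk' : mutR (S k) - mutR (S' k) = 0 := by rw [h k hk, sub_self]
    have hF : Fdel (mutR (S k) - mutR (S' k)) = 0 := by rw [hk']; simp [Fdel, ddelta]
    simp [ha, hF]
  have hsplit := Summable.sum_add_tsum_nat_add m hsum
  have h0 : ∑ i ∈ Finset.range m, a i = 0 :=
    Finset.sum_eq_zero fun i hi => hzero i (Finset.mem_range.mp hi)
  have hgeo0 : Summable (fun k : ℕ => (N:ℝ) * (1/10:ℝ)^k) :=
    (summable_geometric_of_lt_one (by norm_num) (by norm_num)).mul_left _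
  have hgeo : Summable (fun k : ℕ => (N:ℝ) * (1/10:ℝ)^(k+(m+1))) :=
    (summable_nat_add_iff (f := fun k : ℕ => (N:ℝ) * (1/10:ℝ)^k) (m+1)).mpr hgeo0
  have htail : (∑' k : ℕ, a (k + m)) ≤ ∑' k : ℕ, (N:ℝ) * (1/10:ℝ)^(k+(m+1)) := by
    apply Summable.tsum_le_tsum _
      ((summable_nat_add_iff
        (f := fun k => Fdel (mutR (S k) - mutR (S' k)) / 10 ^ (k+1)) m).mpr hsum) hgeo
    intro k
    have h1 : ((N:ℝ) * (1/10:ℝ)^(k+(m+1))) = (N:ℝ) / 10^(k+m+1) := by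
      rw [div_pow, one_pow]; ring_nf
    rw [h1]
    gcongr
    exact Fdel_mutR_le _ _
  have hgeoval : (∑' k : ℕ, (N:ℝ) * (1/10:ℝ)^(k+(m+1))) = (N:ℝ) * ((1/10:ℝ)^m / 9) := by
    have h1 : ∀ k : ℕ, (N:ℝ) * (1/10:ℝ)^(k+(m+1)) = ((N:ℝ) * (1/10:ℝ)^(m+1)) * (1/10:ℝ)^k := by
      intro k; rw [pow_add]; ring
    rw [tsum_congr h1, tsum_mul_left,
      tsum_geometric_of_lt_one (by norm_num) (by norm_num), pow_succ]
    norm_num; ring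
  have hT : (∑' k, a k) ≤ (N:ℝ) * ((1/10:ℝ)^m / 9) := by
    rw [← hsplit, h0, zero_add]; calc (∑' k : ℕ, a (k+m)) ≤ _ := htail
      _ = _ := hgeoval
  have hNpos : (0:ℝ) < N := by exact_mod_cast hN
  have h9N : (0:ℝ) ≤ 9 / N := by positivity
  have hdS : dS S S' = (9 / (N:ℝ)) * ∑' k, a k := by unfold dS; rw [ha]
  rw [hdS]
  calc (9 / (N:ℝ)) * ∑' k, a k
      ≤ (9 / N) * ((N:ℝ) * ((1/10:ℝ)^m / 9)) := mul_le_mul_of_nonneg_left hT h9N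
    _ = (1/10:ℝ)^m := by field_simp

lemma dG_self {N : ℕ} (G : Genome N) : dG G G = 0 := by simp [dG]

lemma one_le_dG {N : ℕ} {G G' : Genome N} (p : Fin N) (h : G p ≠ G' p) : 1 ≤ dG G G' := by
  have h1 := Finset.single_le_sum (f := fun k : Fin N => if G k = G' k then (0:ℝ) else 1)
    (fun i _ => by split <;> norm_num) (Finset.mem_univ p)
  simpa [dG, h] using h1

noncomputable def applyN {N : ℕ} : Genome N → MutSeq N → ℕ → Genome N
  | G, _, 0 => G
  | G, S, n+1 => applyN (Function.update G (S 0).1 (S 0).2) (fun k => S (k+1)) n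

lemma iterate_Mop {N : ℕ} (G : Genome N) (S : MutSeq N) (n : ℕ) :
    (Mop (N := N))^[n] (G, S) = (applyN G S n, fun k => S (k + n)) := by
  induction n generalizing G S with
  | zero => simp [applyN]
  | succ n ih =>
    rw [Function.iterate_succ_apply]
    show (Mop (N := N))^[n] (Mop (G,S)) = _
    rw [show Mop (G,S) = (Function.update G (S 0).1 (S 0).2, fun k => S (k+1)) from rfl, ih]
    refine Prod.ext rfl ?_
    funext k
    exact congrArg S (by omega)

lemma applyN_succ {N : ℕ} (G : Genome N) (S : MutSeq N) (n : ℕ) :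
    applyN G S (n+1) = Function.update (applyN G S n) (S n).1 (S n).2 := by
  induction n generalizing G S with
  | zero => rfl
  | succ n ih =>
    show applyN (Function.update G (S 0).1 (S 0).2) (fun k => S (k+1)) (n+1) = _
    rw [ih]
    rfl

lemma applyN_congr {N : ℕ} {S S' : MutSeq N} (G : Genome N) (n : ℕ)
    (h : ∀ k < n, S k = S' k) : applyN G S n = applyN G S' n := by
  induction n with
  | zero => rfl
  | succ n ih =>
    rw [applyN_succ, applyN_succ, ih (fun k hk => h k (by omega)), h n (by omega)]

lemma applyN_add {N : ℕ} (G : Genome N) (S : MutSeq N) (a b : ℕ) :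
    applyN G S (a + b) = applyN (applyN G S a) (fun k => S (k + a)) b := by
  induction b with
  | zero => rfl
  | succ b ih =>
    rw [show a + (b+1) = (a+b)+1 from rfl, applyN_succ, applyN_succ, ih]
    show _ = Function.update (β := fun _ => Fin 4) _ (S (b+a)).1 (S (b+a)).2
    rw [Nat.add_comm b a]

lemma applyN_setup {N : ℕ} (G : Genome N) (S : MutSeq N) (H : Genome N)
    (hS : ∀ i : Fin N, S i.1 = (i, H i)) : applyN G S N = H := by
  have key : ∀ m, m ≤ N → ∀ p : Fin N, p.1 < m → applyN G S m p = H p := by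
    intro m
    induction m with
    | zero => intro _ p hp; omega
    | succ m ih =>
      intro hm p hp
      have hmN : m < N := by omega
      have hSm : S m = (⟨m, hmN⟩, H ⟨m, hmN⟩) := hS ⟨m, hmN⟩
      rw [applyN_succ, hSm]
      rcases eq_or_ne p (⟨m, hmN⟩ : Fin N) with rfl | hne
      · simp
      · rw [Function.update_of_ne hne]
        have hpm : p.1 ≠ m := fun hh => hne (Fin.ext hh)
        exact ih (by omega) p (by omega)
  funext p; exact key N le_rfl p p.2

-- ### block construction for the dense orbit

section Blocks

variable {N : ℕ} (f : ℕ → Genome N × List (Mut N))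

def blk (e : ℕ) : List (Mut N) :=
  (List.ofFn fun i : Fin N => ((i, (f e).1 i) : Mut N)) ++ (f e).2

def Lpre (e : ℕ) : List (Mut N) := (List.range e).flatMap (blk f)

lemma Lpre_succ (e : ℕ) : Lpre f (e+1) = Lpre f e ++ blk f e := by
  simp [Lpre, List.range_succ]

lemma blk_length (e : ℕ) : (blk f e).length = N + (f e).2.length := by simp [blk]

lemma Lpre_prefix {e e' : ℕ} (h : e ≤ e') : Lpre f e <+: Lpre f e' := by
  induction e', h using Nat.le_induction with
  | base => exact List.prefix_refl _
  | succ e' he ih => exact ih.trans ⟨blk f e', (Lpre_succ f e').symm⟩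

lemma le_length_Lpre (hN : 1 ≤ N) (e : ℕ) : e ≤ (Lpre f e).length := by
  induction e with
  | zero => simp
  | succ e ih =>
    rw [Lpre_succ, List.length_append, blk_length]
    omega

noncomputable def Sbig (hN : 1 ≤ N) : MutSeq N :=
  fun k => (Lpre f (k+1)).getD k (⟨0, hN⟩, 0)

lemma Sbig_eq (hN : 1 ≤ N) {e k : ℕ} (hk : k < (Lpre f e).length) :
    Sbig f hN k = (Lpre f e)[k] := by
  have h1 : Lpre f (k+1) <+: Lpre f (max e (k+1)) := Lpre_prefix f (le_max_right _ _)
  have h2 : Lpre f e <+: Lpre f (max e (k+1)) := Lpre_prefix f (le_max_left _ _)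
  have hk1 : k < (Lpre f (k+1)).length := lt_of_lt_of_le (Nat.lt_succ_self k)
    (le_length_Lpre f hN (k+1))
  unfold Sbig
  rw [List.getD_eq_getElem _ _ hk1, h1.getElem hk1, ← h2.getElem hk]

lemma Sbig_blk (hN : 1 ≤ N) (e : ℕ) {j : ℕ} (hj : j < (blk f e).length) :
    Sbig f hN ((Lpre f e).length + j) = (blk f e)[j] := by
  have hlen : (Lpre f (e+1)).length = (Lpre f e).length + (blk f e).length := by
    rw [Lpre_succ, List.length_append]
  have hlt : (Lpre f e).length + j < (Lpre f (e+1)).length := by omega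
  rw [Sbig_eq f hN hlt]
  have heq : Lpre f (e+1) = Lpre f e ++ blk f e := Lpre_succ f e
  rw [List.getElem_of_eq heq hlt, List.getElem_append_right (by omega)]
  congr 1
  omega

lemma Sbig_setup (hN : 1 ≤ N) (e : ℕ) (i : Fin N) :
    Sbig f hN ((Lpre f e).length + i.1) = (i, (f e).1 i) := by
  have hj : i.1 < (blk f e).length := by rw [blk_length]; omega
  rw [Sbig_blk f hN e hj]
  simp only [blk]
  rw [List.getElem_append_left (by simp [i.2])]
  rw [List.getElem_ofFn]

lemma Sbig_tail (hN : 1 ≤ N) (e : ℕ) {j : ℕ} (hj : j < (f e).2.length) :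
    Sbig f hN ((Lpre f e).length + (N + j)) = (f e).2[j] := by
  have hj' : N + j < (blk f e).length := by rw [blk_length]; omega
  rw [Sbig_blk f hN e hj']
  simp only [blk]
  rw [List.getElem_append_right (by simp)]
  congr 1
  simp

end Blocks

/-- The mutation operator `M` is chaotic according to Knudsen on `(X_N, d)`: it has
sensitive dependence on initial conditions, and it admits a dense orbit. -/
theorem Mop_Knudsen_chaotic (N : ℕ) (hN : 1 ≤ N) :
    (∃ δ₀ > (0 : ℝ), ∀ X : Phase N, ∀ ε > (0 : ℝ),
      ∃ Y : Phase N, dX X Y < ε ∧ ∃ n : ℕ,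
        δ₀ ≤ dX ((Mop (N := N))^[n] X) ((Mop (N := N))^[n] Y)) ∧
    (∃ X : Phase N, ∀ Y : Phase N, ∀ ε > (0 : ℝ),
      ∃ n : ℕ, dX Y ((Mop (N := N))^[n] X) < ε) := by
  constructor
  · -- sensitivity with δ₀ = 1
    refine ⟨1, one_pos, ?_⟩
    rintro ⟨G, S⟩ ε hε
    obtain ⟨n, hn⟩ := exists_pow_lt_of_lt_one hε (by norm_num : (1/10:ℝ) < 1)
    set S' : MutSeq N := Function.update S n ((S n).1, (S n).2 + 1) with hS'def
    have hag : ∀ k < n, S k = S' k := by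
      intro k hk
      rw [hS'def, Function.update_of_ne (by omega)]
    refine ⟨(G, S'), ?_, n+1, ?_⟩
    · have h1 : dS S S' ≤ (1/10:ℝ)^n := dS_le_of_agree hN hag
      show dG G G + dS S S' < ε
      rw [dG_self, zero_add]
      linarith
    · rw [iterate_Mop, iterate_Mop]
      have hgen : applyN G S n = applyN G S' n := applyN_congr G n hag
      have hS'n : S' n = ((S n).1, (S n).2 + 1) := by
        rw [hS'def, Function.update_self]
      have hne : applyN G S (n+1) (S n).1 ≠ applyN G S' (n+1) (S n).1 := by
        rw [applyN_succ, applyN_succ, hS'n, ← hgen]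
        simp only [Function.update_self]
        exact (show ∀ a : Fin 4, a ≠ a + 1 by decide) _
      have hdg := one_le_dG (S n).1 hne
      have hds := dS_nonneg (fun k => S (k + (n+1))) (fun k => S' (k + (n+1)))
      show (1:ℝ) ≤ dG (applyN G S (n+1)) (applyN G S' (n+1))
        + dS (fun k => S (k + (n+1))) (fun k => S' (k + (n+1)))
      linarith
  · -- dense orbit
    obtain ⟨f, hf⟩ := exists_surjective_nat (Genome N × List (Mut N))
    refine ⟨((fun _ => 0 : Genome N), Sbig f hN), ?_⟩
    rintro ⟨H, T⟩ ε hε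
    obtain ⟨m, hm⟩ := exists_pow_lt_of_lt_one hε (by norm_num : (1/10:ℝ) < 1)
    obtain ⟨e, he⟩ := hf (H, List.ofFn fun j : Fin m => T (j : ℕ))
    have he1 : (f e).1 = H := by rw [he]
    have he2 : (f e).2 = List.ofFn fun j : Fin m => T (j : ℕ) := by rw [he]
    refine ⟨(Lpre f e).length + N, ?_⟩
    rw [iterate_Mop]
    have hH : applyN (fun _ => 0) (Sbig f hN) ((Lpre f e).length + N) = H := by
      rw [applyN_add]
      apply applyN_setup
      intro i
      have h1 := Sbig_setup f hN e i
      rw [he1] at h1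
      show Sbig f hN (i.1 + (Lpre f e).length) = _
      rw [Nat.add_comm]
      exact h1
    have hT : dS T (fun k => Sbig f hN (k + ((Lpre f e).length + N))) ≤ (1/10:ℝ)^m := by
      apply dS_le_of_agree hN
      intro k hk
      have hlen : k < (f e).2.length := by rw [he2, List.length_ofFn]; exact hk
      have h1 := Sbig_tail f hN e hlen
      have h2 : (f e).2[k]'hlen = T k := by
        rw [List.getElem_of_eq he2 hlen, List.getElem_ofFn]
      rw [h2] at h1
      show T k = Sbig f hN (k + ((Lpre f e).length + N))
      rw [← h1]
      congr 1
      omega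
    show dG H (applyN (fun _ => 0) (Sbig f hN) ((Lpre f e).length + N))
      + dS T (fun k => Sbig f hN (k + ((Lpre f e).length + N))) < ε
    rw [hH, dG_self, zero_add]
    linarith
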